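/- Let n ≥ 9 be an integer, define μ_n^−(ρ) = −1 − (n·ρ^{(n−1)²}·(1 − (1 − 1/n)·ρ^{2n−1}))/(2n−1), and let ν_n* be the unique zero of μ_n^− in [1, +∞). Then (9/10)·√(n/ln n) < (ν_n*)^{(n²−n)/2} < √n / (ln n)^{1/16}. -/

import Mathlib

/-- The function `μ_n^−` from the analysis of the optimal third order SSP
Runge–Kutta methods with `n²` stages. -/
noncomputable def munMinus (n : ℕ) (ρ : ℝ) : ℝ :=
  -1 - (n * ρ ^ ((n - 1) ^ 2) * (1 - (1 - 1 / (n : ℝ)) * ρ ^ (2 * n - 1))) / (2 * (n : ℝ) - 1)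

lemma exp_neg_le_quad {b : ℝ} (hb : 0 ≤ b) : Real.exp (-b) ≤ 1 - b + b^2/2 := by
  have h := Real.quadratic_le_exp_of_nonneg hb
  have hrec : Real.exp (-b) = (Real.exp b)⁻¹ := by rw [Real.exp_neg]
  rw [hrec, inv_le_iff_one_le_mul₀ (Real.exp_pos b)]
  have hq : (0:ℝ) ≤ 1 - b + b^2/2 := by nlinarith [sq_nonneg (b-1)]
  nlinarith [mul_le_mul_of_nonneg_left h hq, sq_nonneg (b^2)]

lemma exp_le_small {a : ℝ} (h0 : 0 ≤ a) (h1 : a ≤ 1/2) : Real.exp a ≤ 1 + a + 2*a^2 := by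
  have h2 : 1 - a ≤ Real.exp (-a) := by
    have := Real.add_one_le_exp (-a); linarith
  have h3 : Real.exp a * Real.exp (-a) = 1 := by
    rw [← Real.exp_add]; simp
  nlinarith [Real.exp_pos a, Real.exp_pos (-a)]


set_option maxHeartbeats 1600000 in
/-- **Theorem 3.5 (quantitative part).** For `n ≥ 9`, the maximum internal
amplification factor `(ν_n*)^{(n²−n)/2}` of the optimal `n²`-stage third order
SSP Runge–Kutta method satisfies
`(9/10)·√(n/ln n) < (ν_n*)^{(n²−n)/2} < √n / (ln n)^{1/16}`,
where `ν_n*` is the unique zero of `μ_n^−` in `[1, ∞)`. -/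
theorem ssp3_amplification_bounds (n : ℕ) (hn : 9 ≤ n)
    (ν : ℝ) (hν1 : 1 ≤ ν) (hν0 : munMinus n ν = 0)
    (huniq : ∀ ρ : ℝ, 1 ≤ ρ → munMinus n ρ = 0 → ρ = ν) :
    (9 / 10) * Real.sqrt ((n : ℝ) / Real.log n) < ν ^ ((n ^ 2 - n) / 2) ∧
      ν ^ ((n ^ 2 - n) / 2) < Real.sqrt n / Real.log n ^ ((1 : ℝ) / 16) := by
  clear huniq
  have hN9' : (9:ℝ) ≤ (n:ℝ) := by exact_mod_cast hn
  have hE0 : ((n:ℝ)-1) * ν^(n^2) = (n:ℝ) * ν^((n-1)^2) + (2*(n:ℝ) - 1) := by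
    have hN0' : (n:ℝ) ≠ 0 := by linarith
    have h2N : (2*(n:ℝ) - 1) ≠ 0 := by linarith
    have he0 : (n-1)^2 + (2*n-1) = n^2 := by
      zify [show 1 ≤ n by omega, show 1 ≤ 2*n by omega]
      ring
    unfold munMinus at hν0
    have hpow : ν ^ (n^2) = ν ^ ((n-1)^2) * ν ^ (2*n-1) := by rw [← pow_add, he0]
    field_simp at hν0
    rw [hpow]
    apply mul_left_cancel₀ hN0'
    have h2N' : ((n:ℝ) * 2 - 1) ≠ 0 := by linarith
    have hX : ν ^ (n - 1) ^ 2 * ((n:ℝ) - ((n:ℝ) - 1) * ν ^ (2 * n - 1)) / ((n:ℝ) * 2 - 1) = -1 := by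
      linarith
    rw [div_eq_iff h2N'] at hX
    linear_combination (-(n:ℝ)) * hX
  clear hν0
  obtain ⟨N, hNdef⟩ : ∃ x : ℝ, x = (n:ℝ) := ⟨_, rfl⟩
  rw [← hNdef]
  have hN9 : (9:ℝ) ≤ N := by rw [hNdef]; exact_mod_cast hn
  have hNpos : 0 < N := by linarith
  have hN0 : N ≠ 0 := ne_of_gt hNpos
  have hN1 : (0:ℝ) < N - 1 := by linarith
  have hN1' : N - 1 ≠ 0 := ne_of_gt hN1
  obtain ⟨t, htdef⟩ : ∃ x : ℝ, x = Real.log N := ⟨_, rfl⟩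
  rw [← htdef]
  have hexp2 : Real.exp 2 < 9 := by
    have h1 : Real.exp 1 < 2.7182818286 := Real.exp_one_lt_d9
    have h2 : Real.exp 2 = Real.exp 1 * Real.exp 1 := by
      rw [← Real.exp_add]; norm_num
    nlinarith [Real.exp_pos 1]
  have ht2 : 2 < t := by
    rw [htdef]
    exact (Real.lt_log_iff_exp_lt hNpos).mpr (by linarith)
  have htpos : 0 < t := by linarith
  have ht0 : t ≠ 0 := ne_of_gt htpos
  have hlt_ub : Real.log t ≤ t - 1 := Real.log_le_sub_one_of_pos htpos
  have hlt_pos : 0 < Real.log t := Real.log_pos (by linarith)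
  have hlog2 : (0.6931:ℝ) < Real.log t := by
    have h1 := Real.log_two_gt_d9
    have h2 : Real.log 2 ≤ Real.log t := by
      apply Real.log_le_log (by norm_num) (by linarith)
    linarith
  -- polynomial facts via fourth root
  obtain ⟨w, hwdef⟩ : ∃ x : ℝ, x = N ^ ((1:ℝ)/4) := ⟨_, rfl⟩
  have hw4 : w ^ (4:ℕ) = N := by
    rw [hwdef, ← Real.rpow_natCast (N ^ ((1:ℝ)/4)) 4, ← Real.rpow_mul hNpos.le]
    norm_num
  have hw17 : (1.7:ℝ) ≤ w := by
    have h174 : ((1.7:ℝ)^(4:ℕ)) ≤ N := by norm_num; linarith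
    rw [hwdef]
    calc (1.7:ℝ) = (((1.7:ℝ)^(4:ℕ)) : ℝ) ^ ((1:ℝ)/4) := by
          rw [← Real.rpow_natCast (1.7:ℝ) 4, ← Real.rpow_mul (by norm_num : (0:ℝ) ≤ 1.7)]
          norm_num
      _ ≤ N ^ ((1:ℝ)/4) := Real.rpow_le_rpow (by positivity) h174 (by norm_num)
  have hwpos : (0:ℝ) < w := by linarith
  have ht4w : t ≤ 4*w - 4 := by
    have hlw : Real.log w ≤ w - 1 := Real.log_le_sub_one_of_pos hwpos
    have hlogw : t = 4 * Real.log w := by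
      rw [htdef, ← hw4, Real.log_pow]; push_cast; ring
    linarith
  have hP : 2*t^2 ≤ 3*(N-1) := by
    have h1 : 2*(4*w-4)^2 ≤ 3*(w^(4:ℕ) - 1) := by nlinarith [hw17, sq_nonneg (w - 1.7), sq_nonneg (w^2 - 3), sq_nonneg w]
    rw [hw4] at h1
    nlinarith [htpos, ht4w]
  have hQ : 2*t ≤ N - 1 := by
    have h1 : 8*w - 8 ≤ w^(4:ℕ) - 1 := by nlinarith [hw17, sq_nonneg (w - 1.7), sq_nonneg w, sq_nonneg (w^2-2)]
    rw [hw4] at h1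
    linarith
  -- exponents and k
  obtain ⟨e1, he1def⟩ : ∃ x : ℕ, x = (n-1)^2 := ⟨_, rfl⟩
  obtain ⟨e2, he2def⟩ : ∃ x : ℕ, x = 2*n-1 := ⟨_, rfl⟩
  have he : e1 + e2 = n^2 := by
    rw [he1def, he2def]
    zify [show 1 ≤ n by omega, show 1 ≤ 2*n by omega]
    ring
  obtain ⟨k, hkdef⟩ : ∃ x : ℕ, x = (n^2 - n)/2 := ⟨_, rfl⟩
  rw [show (n^2 - n)/2 = k from hkdef.symm]
  have hk2 : 2 * k = n^2 - n := by
    have h1 : n^2 - n = (n-1) * n := by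
      have h2 : n^2 = n * n := sq n
      rw [h2, Nat.sub_mul, one_mul]
    have hdvd : 2 ∣ n^2 - n := by
      rw [h1]
      have h3 := Nat.even_mul_succ_self (n-1)
      rw [show n - 1 + 1 = n by omega] at h3
      exact h3.two_dvd
    rw [hkdef]
    exact Nat.mul_div_cancel' hdvd
  have hkR : ((k:ℕ):ℝ) = N*(N-1)/2 := by
    have hc : ((2*k : ℕ):ℝ) = ((n^2 - n : ℕ):ℝ) := by rw [hk2]
    have hle : n ≤ n^2 := Nat.le_self_pow (by norm_num) n
    push_cast [hle] at hc
    rw [hNdef]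
    push_cast
    linarith
  have hkpos : 0 < k := by
    have h9n : 9*n ≤ n^2 := by
      calc 9*n ≤ n*n := Nat.mul_le_mul_right n hn
        _ = n^2 := (sq n).symm
    omega
  have hk0 : k ≠ 0 := by omega
  have hkR0 : ((k:ℕ):ℝ) ≠ 0 := by
    rw [hkR]; positivity
  have hcastn2 : ((n^2:ℕ):ℝ) = N^2 := by rw [hNdef]; push_cast; ring
  have hcaste1 : ((e1:ℕ):ℝ) = (N-1)^2 := by
    rw [he1def, hNdef]; push_cast [show 1 ≤ n by omega]; ring
  have hE : (N-1) * ν^(n^2) = N * ν^e1 + (2*N - 1) := by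
    rw [hNdef, he1def]; exact hE0
  have hν_pos : (0:ℝ) < ν := by linarith
  have hfac : ∀ x : ℝ, (N-1)*x^(n^2) - N*x^e1 = x^e1 * ((N-1)*x^e2 - N) := by
    intro x
    rw [← he, pow_add]
    ring
  have hhν : 0 < (N-1)*ν^e2 - N := by
    have h1 : ν^e1 * ((N-1)*ν^e2 - N) = 2*N - 1 := by
      rw [← hfac]; linarith
    by_contra hc
    push_neg at hc
    have h2 : ν^e1 * ((N-1)*ν^e2 - N) ≤ 0 :=
      mul_nonpos_iff.mpr (Or.inl ⟨(pow_pos hν_pos e1).le, hc⟩)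
    linarith
  ----------------------------------------------------------------
  -- UPPER BOUND
  ----------------------------------------------------------------
  obtain ⟨u, hudef⟩ : ∃ x : ℝ, x = t/2 - Real.log t/16 := ⟨_, rfl⟩
  have hu_pos : 0 < u := by rw [hudef]; linarith
  have hu_le : u ≤ t/2 := by rw [hudef]; linarith
  have hU_pos : (0:ℝ) < Real.sqrt N / t ^ ((1:ℝ)/16) := by positivity
  have hu_eq : Real.sqrt N / t ^ ((1:ℝ)/16) = Real.exp u := by
    rw [← Real.exp_log hU_pos]
    congr 1
    rw [Real.log_div (Real.sqrt_pos.mpr hNpos).ne' (by positivity),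
        Real.log_sqrt hNpos.le, Real.log_rpow htpos, hudef, ← htdef]
    ring
  have hexp2u : Real.exp (2*u) = N / t ^ ((1:ℝ)/8) := by
    have h8 : t ^ ((1:ℝ)/8) = Real.exp (Real.log t * (1/8)) := Real.rpow_def_of_pos htpos _
    rw [h8, eq_div_iff (Real.exp_pos _).ne', ← Real.exp_add]
    have harg : 2*u + Real.log t * (1/8) = t := by rw [hudef]; ring
    rw [harg, htdef, Real.exp_log hNpos]
  obtain ⟨ρU, hρUdef⟩ : ∃ x : ℝ, x = Real.exp (u / (k:ℝ)) := ⟨_, rfl⟩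
  have hρUpos : 0 < ρU := by rw [hρUdef]; exact Real.exp_pos _
  have hρU1 : 1 ≤ ρU := by rw [hρUdef]; exact Real.one_le_exp (by positivity)
  have hρUpow : ∀ m : ℕ, ρU ^ m = Real.exp (m * (u / (k:ℝ))) := by
    intro m
    rw [hρUdef, ← Real.exp_nat_mul]
  have hρUk : ρU ^ k = Real.exp u := by
    rw [hρUpow]
    congr 1
    field_simp
  have hρUn2 : ρU ^ (n^2) = Real.exp (2*u + 2*u/(N-1)) := by
    rw [hρUpow]
    congr 1
    rw [hcastn2, hkR]
    field_simp
    ring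
  have hρUe1 : ρU ^ e1 = Real.exp (2*u - 2*u/N) := by
    rw [hρUpow]
    congr 1
    rw [hcaste1, hkR]
    field_simp
  have hqa := Real.quadratic_le_exp_of_nonneg (show (0:ℝ) ≤ 2*u/(N-1) by positivity)
  have hqb := exp_neg_le_quad (show (0:ℝ) ≤ 2*u/N by positivity)
  have hkey1 : 4*u - 1 ≤ (N-1) * Real.exp (2*u/(N-1)) - N * Real.exp (-(2*u/N)) := by
    have h1 : (N-1) * (1 + 2*u/(N-1) + (2*u/(N-1))^2/2) ≤ (N-1)*Real.exp (2*u/(N-1)) :=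
      mul_le_mul_of_nonneg_left hqa hN1.le
    have h2 : N * Real.exp (-(2*u/N)) ≤ N * (1 - 2*u/N + (2*u/N)^2/2) :=
      mul_le_mul_of_nonneg_left hqb hNpos.le
    have h3 : (N-1) * (1 + 2*u/(N-1) + (2*u/(N-1))^2/2) - N * (1 - 2*u/N + (2*u/N)^2/2)
        = 4*u - 1 + (2*u^2/(N-1) - 2*u^2/N) := by
      field_simp
      ring
    have h4 : 2*u^2/N ≤ 2*u^2/(N-1) := by
      apply div_le_div_of_nonneg_left (by positivity) hN1
      linarith
    linarith
  have hs_le : t ^ ((1:ℝ)/8) ≤ 1 + (t-1)/8 := by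
    have h8 : t ≤ (1 + (t-1)/8)^(8:ℕ) := by
      have := one_add_mul_le_pow (show (-2:ℝ) ≤ (t-1)/8 by linarith) 8
      have harg : (1:ℝ) + 8*((t-1)/8) = t := by ring
      push_cast at this
      linarith
    calc t ^ ((1:ℝ)/8) ≤ ((1 + (t-1)/8)^(8:ℕ)) ^ ((1:ℝ)/8) :=
          Real.rpow_le_rpow htpos.le h8 (by norm_num)
      _ = 1 + (t-1)/8 := by
          rw [← Real.rpow_natCast (1+(t-1)/8) 8,
              ← Real.rpow_mul (by linarith : (0:ℝ) ≤ 1+(t-1)/8)]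
          norm_num
  have hkey2 : 2 * t ^ ((1:ℝ)/8) ≤ 4*u - 1 := by
    rw [hudef]; linarith
  have hgU : 2*N - 1 < (N-1) * ρU^(n^2) - N * ρU^e1 := by
    rw [hρUn2, hρUe1]
    have e1eq : Real.exp (2*u + 2*u/(N-1)) = Real.exp (2*u) * Real.exp (2*u/(N-1)) := by
      rw [← Real.exp_add]
    have e2eq : Real.exp (2*u - 2*u/N) = Real.exp (2*u) * Real.exp (-(2*u/N)) := by
      rw [← Real.exp_add]; ring_nf
    rw [e1eq, e2eq]
    have hstep : (N / t^((1:ℝ)/8)) * (2 * t^((1:ℝ)/8)) = 2*N := by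
      field_simp
    calc 2*N - 1 < 2*N := by linarith
      _ = Real.exp (2*u) * (2 * t^((1:ℝ)/8)) := by rw [hexp2u, hstep]
      _ ≤ Real.exp (2*u) * (4*u - 1) :=
          mul_le_mul_of_nonneg_left hkey2 (Real.exp_pos _).le
      _ ≤ Real.exp (2*u) * ((N-1) * Real.exp (2*u/(N-1)) - N * Real.exp (-(2*u/N))) :=
          mul_le_mul_of_nonneg_left hkey1 (Real.exp_pos _).le
      _ = (N-1) * (Real.exp (2*u) * Real.exp (2*u/(N-1)))
            - N * (Real.exp (2*u) * Real.exp (-(2*u/N))) := by ring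
  have hνρU : ν < ρU := by
    by_contra hc
    push_neg at hc
    have hgUfac : 0 < ρU^e1 * ((N-1)*ρU^e2 - N) := by
      rw [← hfac]; linarith
    have hhρU : 0 < (N-1)*ρU^e2 - N := by
      by_contra hc2
      push_neg at hc2
      have h2 : ρU^e1 * ((N-1)*ρU^e2 - N) ≤ 0 :=
        mul_nonpos_iff.mpr (Or.inl ⟨(pow_pos hρUpos e1).le, hc2⟩)
      linarith
    have hmono : ρU^e1 * ((N-1)*ρU^e2 - N) ≤ ν^e1 * ((N-1)*ν^e2 - N) := by
      have hp1 : ρU^e1 ≤ ν^e1 := pow_le_pow_left₀ hρUpos.le hc e1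
      have hp2 : ρU^e2 ≤ ν^e2 := pow_le_pow_left₀ hρUpos.le hc e2
      have hh2 : (N-1)*ρU^e2 - N ≤ (N-1)*ν^e2 - N := by
        have := mul_le_mul_of_nonneg_left hp2 hN1.le
        linarith
      exact mul_le_mul hp1 hh2 hhρU.le (pow_nonneg hν_pos.le e1)
    rw [← hfac, ← hfac] at hmono
    linarith
  have hupper : ν ^ k < Real.sqrt N / t ^ ((1:ℝ)/16) := by
    rw [hu_eq, ← hρUk]
    exact pow_lt_pow_left₀ hνρU hν_pos.le hk0
  ----------------------------------------------------------------
  -- LOWER BOUND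
  ----------------------------------------------------------------
  have hl109 : Real.log (10/9:ℝ) ≤ 1/9 := by
    have := Real.log_le_sub_one_of_pos (show (0:ℝ) < 10/9 by norm_num)
    linarith
  have hlneg : Real.log (9/10:ℝ) = - Real.log (10/9:ℝ) := by
    rw [← Real.log_inv]; norm_num
  have hl109' : (1/10:ℝ) ≤ Real.log (10/9) := by
    have h := Real.log_le_sub_one_of_pos (show (0:ℝ) < 9/10 by norm_num)
    rw [hlneg] at h
    linarith
  obtain ⟨v, hvdef⟩ : ∃ x : ℝ, x = (t - Real.log t)/2 - Real.log (10/9) := ⟨_, rfl⟩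
  have hv_pos : 0 < v := by rw [hvdef]; linarith
  have hv_le : v ≤ t/2 := by rw [hvdef]; linarith
  have hL_pos : (0:ℝ) < 9/10 * Real.sqrt (N/t) := by positivity
  have hv_eq : (9/10:ℝ) * Real.sqrt (N/t) = Real.exp v := by
    rw [← Real.exp_log hL_pos]
    congr 1
    rw [Real.log_mul (by norm_num) (Real.sqrt_pos.mpr (by positivity)).ne',
        Real.log_sqrt (by positivity), Real.log_div hN0 ht0, hlneg, hvdef, ← htdef]
    ring
  have hexp2v : Real.exp (2*v) = 81/100 * (N/t) := by
    have h109 : Real.exp (Real.log (10/9:ℝ)) = 10/9 := Real.exp_log (by norm_num)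
    have hlt : Real.exp (Real.log t) = t := Real.exp_log htpos
    have hT : Real.exp t = N := by rw [htdef, Real.exp_log hNpos]
    have harg : 2*v = t - Real.log t - (Real.log (10/9) + Real.log (10/9)) := by
      rw [hvdef]; ring
    rw [harg, Real.exp_sub, Real.exp_sub, Real.exp_add, hT, hlt, h109]
    field_simp
    ring
  obtain ⟨ρL, hρLdef⟩ : ∃ x : ℝ, x = Real.exp (v / (k:ℝ)) := ⟨_, rfl⟩
  have hρLpos : 0 < ρL := by rw [hρLdef]; exact Real.exp_pos _
  have hρL1 : 1 ≤ ρL := by rw [hρLdef]; exact Real.one_le_exp (by positivity)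
  have hρLpow : ∀ m : ℕ, ρL ^ m = Real.exp (m * (v / (k:ℝ))) := by
    intro m
    rw [hρLdef, ← Real.exp_nat_mul]
  have hρLk : ρL ^ k = Real.exp v := by
    rw [hρLpow]
    congr 1
    field_simp
  have hρLn2 : ρL ^ (n^2) = Real.exp (2*v + 2*v/(N-1)) := by
    rw [hρLpow]
    congr 1
    rw [hcastn2, hkR]
    field_simp
    ring
  have hρLe1 : ρL ^ e1 = Real.exp (2*v - 2*v/N) := by
    rw [hρLpow]
    congr 1
    rw [hcaste1, hkR]
    field_simp
  have ha'le : 2*v/(N-1) ≤ 1/2 := by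
    rw [div_le_iff₀ hN1]
    linarith
  have hqa' := exp_le_small (show (0:ℝ) ≤ 2*v/(N-1) by positivity) ha'le
  have hkey1' : (N-1) * Real.exp (2*v/(N-1)) - N * Real.exp (-(2*v/N))
      ≤ 4*v - 1 + 8*v^2/(N-1) := by
    have h1 : (N-1)*Real.exp (2*v/(N-1)) ≤ (N-1)*(1 + 2*v/(N-1) + 2*(2*v/(N-1))^2) :=
      mul_le_mul_of_nonneg_left hqa' hN1.le
    have h2 : N * (1 - 2*v/N) ≤ N * Real.exp (-(2*v/N)) := by
      apply mul_le_mul_of_nonneg_left _ hNpos.le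
      have := Real.add_one_le_exp (-(2*v/N))
      linarith
    have h3 : (N-1)*(1 + 2*v/(N-1) + 2*(2*v/(N-1))^2) - N * (1 - 2*v/N)
        = 4*v - 1 + 8*v^2/(N-1) := by
      field_simp
      ring
    linarith
  have hkey2' : 8*v^2/(N-1) ≤ 3 := by
    rw [div_le_iff₀ hN1]
    have hv2 : v^2 ≤ (t/2)^2 := pow_le_pow_left₀ hv_pos.le hv_le 2
    linarith [hv2, hP]
  have hkey3' : 4*v - 1 + 8*v^2/(N-1) < (1700/729)*t := by
    have h4v : 4*v = 2*t - 2*Real.log t - 4*Real.log (10/9) := by rw [hvdef]; ring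
    have h1 : 4*v - 1 + 8*v^2/(N-1) ≤ 4*v + 2 := by linarith
    have h2 : 4*v + 2 < (1700/729)*t := by
      have hlv : 4*v ≤ 2*t - 2*(0.6931) - 4*(1/10) := by
        rw [h4v]
        have := hlog2
        have := hl109'
        linarith
      linarith
    linarith
  have hgL : (N-1) * ρL^(n^2) - N * ρL^e1 < 2*N - 1 := by
    rw [hρLn2, hρLe1]
    have e1eq : Real.exp (2*v + 2*v/(N-1)) = Real.exp (2*v) * Real.exp (2*v/(N-1)) := by
      rw [← Real.exp_add]
    have e2eq : Real.exp (2*v - 2*v/N) = Real.exp (2*v) * Real.exp (-(2*v/N)) := by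
      rw [← Real.exp_add]; ring_nf
    rw [e1eq, e2eq]
    have hfinal : Real.exp (2*v) * ((1700/729)*t) = 17/9 * N := by
      rw [hexp2v]
      field_simp
      ring
    calc (N-1) * (Real.exp (2*v) * Real.exp (2*v/(N-1)))
          - N * (Real.exp (2*v) * Real.exp (-(2*v/N)))
        = Real.exp (2*v) * ((N-1)*Real.exp (2*v/(N-1)) - N * Real.exp (-(2*v/N))) := by ring
      _ ≤ Real.exp (2*v) * (4*v - 1 + 8*v^2/(N-1)) :=
          mul_le_mul_of_nonneg_left hkey1' (Real.exp_pos _).le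
      _ < Real.exp (2*v) * ((1700/729)*t) :=
          (mul_lt_mul_iff_right₀ (Real.exp_pos _)).mpr hkey3'
      _ = 17/9 * N := hfinal
      _ ≤ 2*N - 1 := by linarith
  have hνρL : ρL < ν := by
    by_contra hc
    push_neg at hc
    have hmono : ν^e1 * ((N-1)*ν^e2 - N) ≤ ρL^e1 * ((N-1)*ρL^e2 - N) := by
      have hp1 : ν^e1 ≤ ρL^e1 := pow_le_pow_left₀ hν_pos.le hc e1
      have hp2 : ν^e2 ≤ ρL^e2 := pow_le_pow_left₀ hν_pos.le hc e2
      have hh2 : (N-1)*ν^e2 - N ≤ (N-1)*ρL^e2 - N := by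
        have := mul_le_mul_of_nonneg_left hp2 hN1.le
        linarith
      exact mul_le_mul hp1 hh2 hhν.le (pow_nonneg hρLpos.le e1)
    rw [← hfac, ← hfac] at hmono
    linarith
  have hlower : (9/10:ℝ) * Real.sqrt (N/t) < ν ^ k := by
    rw [hv_eq, ← hρLk]
    exact pow_lt_pow_left₀ hνρL hρLpos.le hk0
  exact ⟨hlower, hupper⟩
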